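/- Under the same assumptions (potential outcomes, self-selection S=D on obs, random assignment in exp, external validity, overlap, with trivial covariates), for d ≠ s the counterfactual conditional CDF is identified: P(Y_d ≤ y | S = s) = [P(Y ≤ y | D = d, G = exp) - P(D = d | G = obs)·P(Y ≤ y | D = d, G = obs)] / P(D = s | G = obs). -/

import Mathlib

open MeasureTheory

/-- Data source labels: `gexp = 1` (experimental), `gobs = 0` (observational). -/
def gexp : Fin 2 := 1
def gobs : Fin 2 := 0

private lemma fin2_cases : ∀ d s k : Fin 2, d ≠ s → k = d ∨ k = s := by decide

private lemma aux_ident {Ω : Type*} [MeasurableSpace Ω] (μ : Measure Ω) [IsProbabilityMeasure μ]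
    (Z Y : Ω → ℝ) (D S G : Ω → Fin 2)
    (hZm : Measurable Z) (hSm : Measurable S)
    (d s : Fin 2) (hds : d ≠ s) (y : ℝ)
    (hRA' : μ {ω | Z ω ≤ y ∧ D ω = d ∧ G ω = gexp} * μ {ω | G ω = gexp}
      = μ {ω | Z ω ≤ y ∧ G ω = gexp} * μ {ω | D ω = d ∧ G ω = gexp})
    (hEV' : ∀ k g : Fin 2, μ {ω | Z ω ≤ y ∧ S ω = k ∧ G ω = g}
      = μ {ω | Z ω ≤ y ∧ S ω = k} * μ {ω | G ω = g})
    (hEVu : ∀ k g : Fin 2, μ {ω | S ω = k ∧ G ω = g} = μ {ω | S ω = k} * μ {ω | G ω = g})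
    (hnumE : μ {ω | Y ω ≤ y ∧ D ω = d ∧ G ω = gexp} = μ {ω | Z ω ≤ y ∧ D ω = d ∧ G ω = gexp})
    (hnumO : μ {ω | Y ω ≤ y ∧ D ω = d ∧ G ω = gobs} = μ {ω | Z ω ≤ y ∧ S ω = d ∧ G ω = gobs})
    (hDS : ∀ k : Fin 2, μ {ω | D ω = k ∧ G ω = gobs} = μ {ω | S ω = k ∧ G ω = gobs})
    (hgm : ∀ g : Fin 2, MeasurableSet {ω | G ω = g})
    (hOLdE : μ {ω | D ω = d ∧ G ω = gexp} ≠ 0)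
    (hOLdO : μ {ω | D ω = d ∧ G ω = gobs} ≠ 0)
    (hOLsO : μ {ω | D ω = s ∧ G ω = gobs} ≠ 0) :
    (μ {ω | Z ω ≤ y ∧ S ω = s}).toReal / (μ {ω | S ω = s}).toReal
      = ((μ {ω | Y ω ≤ y ∧ D ω = d ∧ G ω = gexp}).toReal
            / (μ {ω | D ω = d ∧ G ω = gexp}).toReal
          - ((μ {ω | D ω = d ∧ G ω = gobs}).toReal / (μ {ω | G ω = gobs}).toReal)
            * ((μ {ω | Y ω ≤ y ∧ D ω = d ∧ G ω = gobs}).toReal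
                / (μ {ω | D ω = d ∧ G ω = gobs}).toReal))
        / ((μ {ω | D ω = s ∧ G ω = gobs}).toReal / (μ {ω | G ω = gobs}).toReal) := by
  have msZ : MeasurableSet {ω | Z ω ≤ y} := hZm measurableSet_Iic
  have msS : ∀ k : Fin 2, MeasurableSet {ω | S ω = k} :=
    fun k => hSm (measurableSet_singleton k)
  -- splitting over S = d / S = s
  have hsplit : ∀ P : Ω → Prop, MeasurableSet {ω | P ω} →
      μ {ω | P ω} = μ {ω | P ω ∧ S ω = d} + μ {ω | P ω ∧ S ω = s} := by
    intro P hP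
    have hu : {ω | P ω} = {ω | P ω ∧ S ω = d} ∪ {ω | P ω ∧ S ω = s} := by
      ext ω
      simp only [Set.mem_setOf_eq, Set.mem_union]
      constructor
      · intro h
        rcases fin2_cases d s (S ω) hds with h' | h'
        · exact Or.inl ⟨h, h'⟩
        · exact Or.inr ⟨h, h'⟩
      · rintro (⟨h, _⟩ | ⟨h, _⟩) <;> exact h
    rw [hu]
    refine measure_union ?_ (hP.inter (msS s))
    exact Set.disjoint_left.2 (by rintro ω ⟨_, h1⟩ ⟨_, h2⟩; exact hds (h1.symm.trans h2))
  -- experimental side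
  have he1 : μ {ω | Z ω ≤ y ∧ G ω = gexp}
      = μ {ω | Z ω ≤ y} * μ {ω | G ω = gexp} := by
    have h1 := hsplit (fun ω => Z ω ≤ y ∧ G ω = gexp) (msZ.inter (hgm gexp))
    have e1 : {ω | (Z ω ≤ y ∧ G ω = gexp) ∧ S ω = d}
        = {ω | Z ω ≤ y ∧ S ω = d ∧ G ω = gexp} := by
      ext ω; simp only [Set.mem_setOf_eq]; tauto
    have e2 : {ω | (Z ω ≤ y ∧ G ω = gexp) ∧ S ω = s}
        = {ω | Z ω ≤ y ∧ S ω = s ∧ G ω = gexp} := by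
      ext ω; simp only [Set.mem_setOf_eq]; tauto
    rw [e1, e2] at h1
    rw [h1, hEV' d gexp, hEV' s gexp, hsplit (fun ω => Z ω ≤ y) msZ, add_mul]
  have hexpne : (μ {ω | G ω = gexp}).toReal ≠ 0 := by
    have hle : μ {ω | D ω = d ∧ G ω = gexp} ≤ μ {ω | G ω = gexp} :=
      measure_mono fun ω hh => hh.2
    have : μ {ω | G ω = gexp} ≠ 0 := fun h => hOLdE (le_antisymm (h ▸ hle) zero_le)
    exact ENNReal.toReal_ne_zero.2 ⟨this, measure_ne_top μ _⟩
  have hExpR : (μ {ω | Z ω ≤ y ∧ D ω = d ∧ G ω = gexp}).toReal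
      = (μ {ω | Z ω ≤ y}).toReal * (μ {ω | D ω = d ∧ G ω = gexp}).toReal := by
    have h := hRA'
    rw [he1] at h
    have h2 := congrArg ENNReal.toReal h
    simp only [ENNReal.toReal_mul] at h2
    apply mul_right_cancel₀ hexpne
    linear_combination h2
  -- observational side, real versions
  have hfullR : (μ {ω | Z ω ≤ y}).toReal
      = (μ {ω | Z ω ≤ y ∧ S ω = d}).toReal + (μ {ω | Z ω ≤ y ∧ S ω = s}).toReal := by
    rw [hsplit (fun ω => Z ω ≤ y) msZ,
      ENNReal.toReal_add (measure_ne_top μ _) (measure_ne_top μ _)]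
  have hbR : (μ {ω | Z ω ≤ y ∧ S ω = d ∧ G ω = gobs}).toReal
      = (μ {ω | Z ω ≤ y ∧ S ω = d}).toReal * (μ {ω | G ω = gobs}).toReal := by
    rw [hEV' d gobs, ENNReal.toReal_mul]
  have hqdR : (μ {ω | S ω = d ∧ G ω = gobs}).toReal
      = (μ {ω | S ω = d}).toReal * (μ {ω | G ω = gobs}).toReal := by
    rw [hEVu d gobs, ENNReal.toReal_mul]
  have hqsR : (μ {ω | S ω = s ∧ G ω = gobs}).toReal
      = (μ {ω | S ω = s}).toReal * (μ {ω | G ω = gobs}).toReal := by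
    rw [hEVu s gobs, ENNReal.toReal_mul]
  -- positivity
  have hpo : (μ {ω | G ω = gobs}).toReal ≠ 0 := by
    have hle : μ {ω | D ω = d ∧ G ω = gobs} ≤ μ {ω | G ω = gobs} :=
      measure_mono fun ω hh => hh.2
    have : μ {ω | G ω = gobs} ≠ 0 := fun h => hOLdO (le_antisymm (h ▸ hle) zero_le)
    exact ENNReal.toReal_ne_zero.2 ⟨this, measure_ne_top μ _⟩
  have hpde : (μ {ω | D ω = d ∧ G ω = gexp}).toReal ≠ 0 :=
    ENNReal.toReal_ne_zero.2 ⟨hOLdE, measure_ne_top μ _⟩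
  have hqd : (μ {ω | S ω = d}).toReal ≠ 0 := by
    intro h
    apply hOLdO
    rw [hDS d, hEVu d gobs]
    have : μ {ω | S ω = d} = 0 ∨ μ {ω | S ω = d} = ⊤ := by
      rcases eq_or_ne (μ {ω | S ω = d}) 0 with h' | h'
      · exact Or.inl h'
      · exact absurd (ENNReal.toReal_ne_zero.2 ⟨h', measure_ne_top μ _⟩) (by simp [h])
    rcases this with h' | h'
    · rw [h']; simp
    · exact absurd h' (measure_ne_top μ _)
  have hqs : (μ {ω | S ω = s}).toReal ≠ 0 := by
    intro h
    apply hOLsO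
    rw [hDS s, hEVu s gobs]
    rcases eq_or_ne (μ {ω | S ω = s}) 0 with h' | h'
    · rw [h']; simp
    · exact absurd (ENNReal.toReal_ne_zero.2 ⟨h', measure_ne_top μ _⟩) (by simp [h])
  -- assemble
  rw [hnumE, hnumO, hDS d, hDS s, hExpR, hfullR, hbR, hqdR, hqsR]
  field_simp
  ring

theorem identification_counterfactual_conditional_cdf
    {Ω : Type*} [MeasurableSpace Ω] (μ : Measure Ω) [IsProbabilityMeasure μ]
    (Y1 Y0 Y : Ω → ℝ) (D S G : Ω → Fin 2)
    (hY1 : Measurable Y1) (hY0 : Measurable Y0) (hY : Measurable Y)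
    (hD : Measurable D) (hSm : Measurable S) (hG : Measurable G)
    -- Assumption 1 (potential outcomes)
    (hPO : ∀ᵐ ω ∂μ, Y ω = if D ω = 1 then Y1 ω else Y0 ω)
    -- Assumption 2 (self-selection): P(S = D | G = obs) = 1
    (hSS : μ {ω | G ω = gobs ∧ S ω = D ω} = μ {ω | G ω = gobs})
    -- Assumption 3 (random assignment): (Y1,Y0) ⟂ D given G = exp
    (hRA : ∀ A : Set (ℝ × ℝ), MeasurableSet A → ∀ d : Fin 2,
      μ {ω | (Y1 ω, Y0 ω) ∈ A ∧ D ω = d ∧ G ω = gexp} * μ {ω | G ω = gexp}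
        = μ {ω | (Y1 ω, Y0 ω) ∈ A ∧ G ω = gexp} * μ {ω | D ω = d ∧ G ω = gexp})
    -- Assumption 4 (external validity): (Y1,Y0,S) ⟂ G
    (hEV : ∀ A : Set (ℝ × ℝ), MeasurableSet A → ∀ s g : Fin 2,
      μ {ω | (Y1 ω, Y0 ω) ∈ A ∧ S ω = s ∧ G ω = g}
        = μ {ω | (Y1 ω, Y0 ω) ∈ A ∧ S ω = s} * μ {ω | G ω = g})
    -- Assumption 5 (overlap)
    (hOL : ∀ d g : Fin 2, 0 < μ {ω | D ω = d ∧ G ω = g}) :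
    ∀ d s : Fin 2, d ≠ s → ∀ y : ℝ,
      (μ {ω | (if d = 1 then Y1 ω else Y0 ω) ≤ y ∧ S ω = s}).toReal
          / (μ {ω | S ω = s}).toReal
        = ((μ {ω | Y ω ≤ y ∧ D ω = d ∧ G ω = gexp}).toReal
              / (μ {ω | D ω = d ∧ G ω = gexp}).toReal
            - ((μ {ω | D ω = d ∧ G ω = gobs}).toReal / (μ {ω | G ω = gobs}).toReal)
              * ((μ {ω | Y ω ≤ y ∧ D ω = d ∧ G ω = gobs}).toReal
                  / (μ {ω | D ω = d ∧ G ω = gobs}).toReal))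
          / ((μ {ω | D ω = s ∧ G ω = gobs}).toReal / (μ {ω | G ω = gobs}).toReal) := by
  intro d s hds y
  have hZm : Measurable (fun ω => if d = 1 then Y1 ω else Y0 ω) := by
    by_cases h : d = 1 <;> simp only [h, if_true, if_false] <;> first | exact hY1 | exact hY0
  have hA : MeasurableSet {p : ℝ × ℝ | (if d = 1 then p.1 else p.2) ≤ y} := by
    by_cases h : d = 1
    · simp only [if_pos h]; exact measurableSet_le measurable_fst measurable_const
    · simp only [if_neg h]; exact measurableSet_le measurable_snd measurable_const
  -- self-selection a.e.
  have hSDmeas : MeasurableSet {ω | S ω = D ω} := by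
    have h : {ω | S ω = D ω} = ⋃ k : Fin 2, (S ⁻¹' {k} ∩ D ⁻¹' {k}) := by
      ext ω
      simp only [Set.mem_setOf_eq, Set.mem_iUnion, Set.mem_inter_iff, Set.mem_preimage,
        Set.mem_singleton_iff]
      exact ⟨fun h => ⟨S ω, rfl, h.symm⟩, fun ⟨k, h1, h2⟩ => h1.trans h2.symm⟩
    rw [h]
    exact MeasurableSet.iUnion fun k =>
      (hSm (measurableSet_singleton k)).inter (hD (measurableSet_singleton k))
  have hSSae : ∀ᵐ ω ∂μ, G ω = gobs → S ω = D ω := by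
    have hsub : {ω | G ω = gobs ∧ S ω = D ω} ⊆ {ω | G ω = gobs} := fun ω h => h.1
    have hm : MeasurableSet {ω | G ω = gobs ∧ S ω = D ω} :=
      (hG (measurableSet_singleton gobs)).inter hSDmeas
    have hdiff : μ ({ω | G ω = gobs} \ {ω | G ω = gobs ∧ S ω = D ω}) = 0 := by
      rw [measure_diff hsub hm.nullMeasurableSet (measure_ne_top μ _), hSS, tsub_self]
    rw [ae_iff]
    have hset : {ω | ¬ (G ω = gobs → S ω = D ω)}
        = {ω | G ω = gobs} \ {ω | G ω = gobs ∧ S ω = D ω} := by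
      ext ω
      simp only [Set.mem_setOf_eq, Set.mem_diff]
      tauto
    rw [hset]; exact hdiff
  -- potential outcome key
  have hKey : ∀ᵐ ω ∂μ, D ω = d → Y ω = (if d = 1 then Y1 ω else Y0 ω) := by
    filter_upwards [hPO] with ω h hDd
    rw [h, hDd]
  have hnumE : μ {ω | Y ω ≤ y ∧ D ω = d ∧ G ω = gexp}
      = μ {ω | (if d = 1 then Y1 ω else Y0 ω) ≤ y ∧ D ω = d ∧ G ω = gexp} := by
    apply measure_congr
    filter_upwards [hKey] with ω h
    simp only [Set.mem_setOf_eq, eq_iff_iff]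
    constructor
    · rintro ⟨h1, h2, h3⟩; exact ⟨by rw [← h h2]; exact h1, h2, h3⟩
    · rintro ⟨h1, h2, h3⟩; exact ⟨by rw [h h2]; exact h1, h2, h3⟩
  have hnumO : μ {ω | Y ω ≤ y ∧ D ω = d ∧ G ω = gobs}
      = μ {ω | (if d = 1 then Y1 ω else Y0 ω) ≤ y ∧ S ω = d ∧ G ω = gobs} := by
    apply measure_congr
    filter_upwards [hKey, hSSae] with ω h1 h2
    simp only [Set.mem_setOf_eq, eq_iff_iff]
    constructor
    · rintro ⟨hy', hd', hgo⟩
      exact ⟨by rw [← h1 hd']; exact hy', by rw [h2 hgo, hd'], hgo⟩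
    · rintro ⟨hy', hs', hgo⟩
      have hd' : D ω = d := by rw [← h2 hgo]; exact hs'
      exact ⟨by rw [h1 hd']; exact hy', hd', hgo⟩
  have hDS : ∀ k : Fin 2, μ {ω | D ω = k ∧ G ω = gobs} = μ {ω | S ω = k ∧ G ω = gobs} := by
    intro k
    apply measure_congr
    filter_upwards [hSSae] with ω h2
    simp only [Set.mem_setOf_eq, eq_iff_iff]
    constructor
    · rintro ⟨hk, hgo⟩; exact ⟨by rw [h2 hgo]; exact hk, hgo⟩
    · rintro ⟨hk, hgo⟩; exact ⟨by rw [← h2 hgo]; exact hk, hgo⟩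
  have hEVu : ∀ k g : Fin 2, μ {ω | S ω = k ∧ G ω = g}
      = μ {ω | S ω = k} * μ {ω | G ω = g} := by
    intro k g
    have h := hEV Set.univ MeasurableSet.univ k g
    simpa only [Set.mem_univ, true_and] using h
  exact aux_ident μ (fun ω => if d = 1 then Y1 ω else Y0 ω) Y D S G hZm hSm d s hds y
    (hRA _ hA d) (fun k g => hEV _ hA k g) hEVu hnumE hnumO hDS
    (fun g => hG (measurableSet_singleton g))
    (hOL d gexp).ne' (hOL d gobs).ne' (hOL s gobs).ne'
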